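/- Fix reals T_− < T_+ and set m(x) = T_− + x(T_+ − T_−) for x ∈ [0,1], m^N_k = m(k/N), and C̃^N_{k,ℓ} = ((T_+−T_−)²/(N+1))(k/N)(1 − ℓ/N) for 0 ≤ k < ℓ ≤ N, C̃^N_{k,k} = ((T_+−T_−)²/(N+1))(k/N)(1 − k/N) + (T_+−T_−)²/(2N(N+1)), extended symmetrically by C̃^N_{ℓ,k} = C̃^N_{k,ℓ}. For each N ≥ 2 let ν_N be a probability measure on [T_−,T_+]^{N+1} (coordinates O_0,…,O_N) with E_{ν_N}(O_k) = m^N_k for all k and Cov_{ν_N}(O_k, O_ℓ) ≤ C̃^N_{k,ℓ} for all k, ℓ. Then for every continuous ψ : [0,1] → ℝ and every ε > 0, lim_{N→∞} ν_N( | (1/N) Σ_{k=0}^{N} ψ(k/N) O_k − ∫₀¹ ψ(x) m(x) dx | > ε ) = 0. -/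

import Mathlib

open MeasureTheory

open Filter Finset

lemma riemann_tendsto (g : ℝ → ℝ) (hg : ContinuousOn g (Set.Icc 0 1)) :
    Tendsto (fun N : ℕ => (1 / (N : ℝ)) * ∑ k ∈ Finset.range N, g ((k : ℝ) / N))
      atTop (nhds (∫ x in (0:ℝ)..1, g x)) := by
  rw [Metric.tendsto_atTop]
  intro δ hδ
  have huc := isCompact_Icc.uniformContinuousOn_of_continuous hg
  rw [Metric.uniformContinuousOn_iff] at huc
  obtain ⟨δ', hδ'pos, hδ'⟩ := huc (δ / 2) (by linarith)
  refine ⟨⌈1 / δ'⌉₊ + 1, fun N hN => ?_⟩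
  have hN1 : 1 ≤ N := le_trans (Nat.le_add_left 1 _) hN
  have hNpos : (0 : ℝ) < N := by exact_mod_cast hN1
  have hceil : (1 : ℝ) / δ' < N := by
    refine lt_of_le_of_lt (Nat.le_ceil _) ?_
    exact_mod_cast Nat.lt_of_lt_of_le (Nat.lt_succ_self _) hN
  have hinv : 1 / (N : ℝ) < δ' := by
    rw [div_lt_iff₀ hNpos]
    have := (div_lt_iff₀ hδ'pos).mp hceil
    linarith
  have hmem : ∀ k : ℕ, k ≤ N → ((k : ℝ) / N) ∈ Set.Icc (0:ℝ) 1 := by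
    intro k hk
    refine ⟨by positivity, ?_⟩
    rw [div_le_one hNpos]; exact_mod_cast hk
  have hle : ∀ k : ℕ, ((k : ℝ) / N) ≤ ((k : ℝ) + 1) / N := by
    intro k
    apply (div_le_div_iff_of_pos_right hNpos).mpr
    linarith
  have hsub : ∀ k : ℕ, k < N → Set.uIcc ((k : ℝ) / N) (((k : ℝ) + 1) / N) ⊆ Set.Icc 0 1 := by
    intro k hk
    rw [Set.uIcc_of_le (hle k)]
    apply Set.Icc_subset_Icc (hmem k hk.le).1
    rw [div_le_one hNpos]
    have : ((k : ℝ) + 1) = ((k + 1 : ℕ) : ℝ) := by push_cast; ring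
    rw [this]; exact_mod_cast hk
  have hint : ∀ k : ℕ, k < N → IntervalIntegrable g volume ((k : ℝ) / N) (((k : ℝ) + 1) / N) :=
    fun k hk => (hg.mono (hsub k hk)).intervalIntegrable
  have hsplit : ∫ x in (0:ℝ)..1, g x
      = ∑ k ∈ Finset.range N, ∫ x in ((k : ℝ) / N)..(((k : ℝ) + 1) / N), g x := by
    have h2 : ∀ k < N, IntervalIntegrable g volume
        ((fun j : ℕ => (j : ℝ) / N) k) ((fun j : ℕ => (j : ℝ) / N) (k + 1)) := by
      intro k hk
      show IntervalIntegrable g volume ((k : ℝ) / N) (((k + 1 : ℕ) : ℝ) / N)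
      have heq : ((k + 1 : ℕ) : ℝ) / N = ((k : ℝ) + 1) / N := by push_cast; ring
      rw [heq]
      exact hint k hk
    have h3 := intervalIntegral.sum_integral_adjacent_intervals (f := g) (μ := volume) h2
    have e0 : ((0 : ℕ) : ℝ) / N = 0 := by norm_num
    have eN : ((N : ℕ) : ℝ) / N = 1 := div_self hNpos.ne'
    rw [e0, eN] at h3
    rw [← h3]
    refine Finset.sum_congr rfl fun k _ => ?_
    have heq : ((k + 1 : ℕ) : ℝ) / N = ((k : ℝ) + 1) / N := by push_cast; ring
    rw [heq]
  rw [Real.dist_eq, hsplit, Finset.mul_sum, ← Finset.sum_sub_distrib]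
  have hterm : ∀ k ∈ Finset.range N,
      |1 / (N : ℝ) * g ((k : ℝ) / N) - ∫ x in ((k : ℝ) / N)..(((k : ℝ) + 1) / N), g x|
        ≤ δ / 2 * (1 / N) := by
    intro k hk
    rw [Finset.mem_range] at hk
    have hconst : 1 / (N : ℝ) * g ((k : ℝ) / N)
        = ∫ _ in ((k : ℝ) / N)..(((k : ℝ) + 1) / N), g ((k : ℝ) / N) := by
      rw [intervalIntegral.integral_const, smul_eq_mul]
      congr 1
      field_simp
      ring
    rw [hconst, ← intervalIntegral.integral_sub intervalIntegrable_const (hint k hk)]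
    have hbound : ∀ x ∈ Set.uIoc ((k : ℝ) / N) (((k : ℝ) + 1) / N),
        ‖g ((k : ℝ) / N) - g x‖ ≤ δ / 2 := by
      intro x hx
      rw [Set.uIoc_of_le (hle k)] at hx
      have hx1 : x ∈ Set.Icc (0:ℝ) 1 := by
        refine ⟨le_trans (hmem k hk.le).1 hx.1.le, ?_⟩
        refine le_trans hx.2 ?_
        rw [div_le_one hNpos]
        have : ((k : ℝ) + 1) = ((k + 1 : ℕ) : ℝ) := by push_cast; ring
        rw [this]; exact_mod_cast hk
      have hdist : dist ((k : ℝ) / N) x < δ' := by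
        rw [Real.dist_eq, abs_sub_comm, abs_of_pos (by linarith [hx.1])]
        have : x - (k : ℝ) / N ≤ 1 / N := by
          have := hx.2
          have h2 : ((k : ℝ) + 1) / N = (k : ℝ) / N + 1 / N := by ring
          linarith [h2 ▸ this]
        linarith
      have := hδ' _ (hmem k hk.le) _ hx1 hdist
      rw [Real.dist_eq] at this
      exact le_of_lt this
    have := intervalIntegral.norm_integral_le_of_norm_le_const hbound
    rw [Real.norm_eq_abs] at this
    refine le_trans this ?_
    have heq : |((k : ℝ) + 1) / N - (k : ℝ) / N| = 1 / N := by
      rw [show ((k : ℝ) + 1) / N - (k : ℝ) / N = 1 / N by ring]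
      exact abs_of_pos (by positivity)
    rw [heq]
  calc |∑ k ∈ Finset.range N, (1 / (N : ℝ) * g ((k : ℝ) / N)
          - ∫ x in ((k : ℝ) / N)..(((k : ℝ) + 1) / N), g x)|
      ≤ ∑ k ∈ Finset.range N, |1 / (N : ℝ) * g ((k : ℝ) / N)
          - ∫ x in ((k : ℝ) / N)..(((k : ℝ) + 1) / N), g x| :=
        Finset.abs_sum_le_sum_abs _ _
    _ ≤ ∑ _k ∈ Finset.range N, δ / 2 * (1 / N) := Finset.sum_le_sum hterm
    _ = δ / 2 := by
        rw [Finset.sum_const, Finset.card_range, nsmul_eq_mul]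
        field_simp
    _ < δ := by linarith

/-- The covariance bound `C̃^N_{k,ℓ}` (extended symmetrically). -/
noncomputable def Ctil (N : ℕ) (Tm Tp : ℝ) (k l : ℕ) : ℝ :=
  if k = l then
    (Tp - Tm) ^ 2 / (N + 1) * ((k : ℝ) / N) * (1 - (k : ℝ) / N)
      + (Tp - Tm) ^ 2 / (2 * N * (N + 1))
  else
    (Tp - Tm) ^ 2 / (N + 1) * (((min k l : ℕ) : ℝ) / N) * (1 - ((max k l : ℕ) : ℝ) / N)

lemma Ctil_diag_le (N : ℕ) (hN : 2 ≤ N) (Tm Tp : ℝ) (k : ℕ) (hk : k ≤ N) :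
    Ctil N Tm Tp k k ≤ (Tp - Tm) ^ 2 / (2 * N) := by
  have hNpos : (0:ℝ) < N := by
    have : (0:ℕ) < N := lt_of_lt_of_le (by norm_num) hN
    exact_mod_cast this
  have hN2 : (2:ℝ) ≤ N := by exact_mod_cast hN
  have hA0 : (0:ℝ) ≤ (Tp - Tm)^2 := sq_nonneg _
  have hx0 : 0 ≤ (k:ℝ)/N := by positivity
  have hx1 : (k:ℝ)/N ≤ 1 := by rw [div_le_one hNpos]; exact_mod_cast hk
  rw [Ctil, if_pos rfl]
  have h14 : ((k:ℝ)/N) * (1 - (k:ℝ)/N) ≤ 1/4 := by nlinarith [sq_nonneg ((k:ℝ)/N - 1/2)]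
  have h1 : (Tp - Tm)^2 / (N+1) * ((k:ℝ)/N) * (1 - (k:ℝ)/N) ≤ (Tp - Tm)^2 / (4*N) := by
    calc (Tp - Tm)^2 / (N+1) * ((k:ℝ)/N) * (1 - (k:ℝ)/N)
        = (Tp - Tm)^2 / (N+1) * (((k:ℝ)/N) * (1 - (k:ℝ)/N)) := by ring
      _ ≤ (Tp - Tm)^2 / (N+1) * (1/4) := by
          exact mul_le_mul_of_nonneg_left h14 (by positivity)
      _ = (Tp - Tm)^2 / ((N+1)*4) := by
          rw [mul_one_div, div_div]
      _ ≤ (Tp - Tm)^2 / (4*N) :=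
          div_le_div_of_nonneg_left hA0 (by positivity) (by nlinarith)
  have h2 : (Tp - Tm)^2 / (2*N*(N+1)) ≤ (Tp - Tm)^2 / (4*N) :=
    div_le_div_of_nonneg_left hA0 (by positivity) (by nlinarith)
  have h3 : (Tp - Tm)^2 / (4*N) + (Tp - Tm)^2 / (4*N) = (Tp - Tm)^2 / (2*N) := by
    field_simp
    ring
  linarith

lemma variance_bound (Tm Tp : ℝ) (hT : Tm < Tp) (N : ℕ) (hN2 : 2 ≤ N)
    (μ : Measure (Fin (N + 1) → ℝ)) [IsProbabilityMeasure μ]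
    (hsupp : ∀ᵐ O ∂μ, ∀ k, O k ∈ Set.Icc Tm Tp)
    (hmean : ∀ k : Fin (N + 1), ∫ O, O k ∂μ = Tm + ((k : ℕ) : ℝ) / N * (Tp - Tm))
    (hcov : ∀ k l : Fin (N + 1),
        ∫ O, O k * O l ∂μ - (∫ O, O k ∂μ) * (∫ O, O l ∂μ) ≤ Ctil N Tm Tp (k : ℕ) (l : ℕ))
    (ψ : ℝ → ℝ) (M : ℝ) (hM : ∀ x ∈ Set.Icc (0:ℝ) 1, |ψ x| ≤ M) :
    Integrable (fun O => (∑ k : Fin (N + 1),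
        (ψ (((k : ℕ) : ℝ) / N) / N) * (O k - (Tm + ((k : ℕ) : ℝ) / N * (Tp - Tm)))) ^ 2) μ
    ∧ ∫ O, (∑ k : Fin (N + 1),
        (ψ (((k : ℕ) : ℝ) / N) / N) * (O k - (Tm + ((k : ℕ) : ℝ) / N * (Tp - Tm)))) ^ 2 ∂μ
      ≤ 2 * M ^ 2 * (Tp - Tm) ^ 2 / N := by
  have hNpos : (0:ℝ) < N := by
    have : (0:ℕ) < N := lt_of_lt_of_le (by norm_num) hN2
    exact_mod_cast this
  have hTT : (0:ℝ) ≤ Tp - Tm := sub_nonneg.mpr hT.le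
  have hM0 : 0 ≤ M := le_trans (abs_nonneg _) (hM 0 ⟨le_refl _, zero_le_one⟩)
  -- abbreviations (definitionally equal to the goal's pieces)
  set c : Fin (N+1) → ℝ := fun k => ψ (((k : ℕ) : ℝ) / N) / N with hc
  set mm : Fin (N+1) → ℝ := fun k => Tm + ((k : ℕ) : ℝ) / N * (Tp - Tm) with hmm
  set X : (Fin (N+1) → ℝ) → ℝ := fun O => ∑ k : Fin (N+1), c k * (O k - mm k) with hX
  suffices hgoal : Integrable (fun O => X O ^ 2) μ ∧ ∫ O, X O ^ 2 ∂μ ≤ 2 * M ^ 2 * (Tp - Tm) ^ 2 / N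
    from hgoal
  clear_value c mm X
  have hXeq : ∀ O : Fin (N+1) → ℝ, X O = ∑ k : Fin (N+1), c k * (O k - mm k) :=
    fun O => by simp only [hX]
  have hfrac : ∀ k : Fin (N+1), ((k:ℕ):ℝ)/N ∈ Set.Icc (0:ℝ) 1 := by
    intro k
    refine ⟨by positivity, ?_⟩
    rw [div_le_one hNpos]
    exact_mod_cast Nat.lt_succ_iff.mp k.isLt
  have hcb : ∀ k, |c k| ≤ M / N := by
    intro k
    rw [hc]
    simp only
    rw [abs_div, abs_of_pos hNpos]
    gcongr
    exact hM _ (hfrac k)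
  have hmIcc : ∀ k, mm k ∈ Set.Icc Tm Tp := by
    intro k
    obtain ⟨h0, h1⟩ := hfrac k
    constructor
    · simp only [hmm]; nlinarith
    · simp only [hmm]; nlinarith
  have hmeas_e : ∀ k : Fin (N+1), Measurable (fun O : Fin (N+1) → ℝ => O k - mm k) :=
    fun k => (measurable_pi_apply k).sub measurable_const
  have hbd_e : ∀ k : Fin (N+1), ∀ᵐ O ∂μ, |O k - mm k| ≤ Tp - Tm := by
    intro k
    filter_upwards [hsupp] with O hO
    obtain ⟨h1, h2⟩ := hO k
    obtain ⟨h3, h4⟩ := hmIcc k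
    rw [abs_le]
    constructor <;> linarith
  have hint_e2 : ∀ k : Fin (N+1), Integrable (fun O => (O k - mm k)^2) μ := by
    intro k
    refine (integrable_const ((Tp - Tm)^2)).mono' ((hmeas_e k).pow_const 2).aestronglyMeasurable ?_
    filter_upwards [hbd_e k] with O hO
    rw [Real.norm_eq_abs, abs_of_nonneg (sq_nonneg _), ← sq_abs]
    exact pow_le_pow_left₀ (abs_nonneg _) hO 2
  have hv0 : ∀ k : Fin (N+1), 0 ≤ ∫ O, (O k - mm k)^2 ∂μ :=
    fun k => integral_nonneg fun O => sq_nonneg _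
  have hvA : ∀ k : Fin (N+1), ∫ O, (O k - mm k)^2 ∂μ ≤ (Tp - Tm)^2 / (2*N) := by
    intro k
    have hK : (0:ℝ) ≤ |Tm| + |Tp| := by positivity
    have hbdO : ∀ᵐ O ∂μ, ‖O k‖ ≤ |Tm| + |Tp| := by
      filter_upwards [hsupp] with O hO
      obtain ⟨h1, h2⟩ := hO k
      rw [Real.norm_eq_abs, abs_le]
      constructor
      · linarith [neg_abs_le Tm, abs_nonneg Tp]
      · linarith [le_abs_self Tp, abs_nonneg Tm]
    have hintO : Integrable (fun O => O k) μ :=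
      (integrable_const (|Tm| + |Tp|)).mono' (measurable_pi_apply k).aestronglyMeasurable hbdO
    have hintOO : Integrable (fun O => O k * O k) μ := by
      refine (integrable_const ((|Tm| + |Tp|)^2)).mono'
        (((measurable_pi_apply k).mul (measurable_pi_apply k)).aestronglyMeasurable) ?_
      filter_upwards [hbdO] with O hO
      rw [Real.norm_eq_abs, abs_mul]
      rw [Real.norm_eq_abs] at hO
      calc |O k| * |O k| ≤ (|Tm|+|Tp|) * (|Tm|+|Tp|) := mul_le_mul hO hO (abs_nonneg _) hK
        _ = (|Tm|+|Tp|)^2 := (sq _).symm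
    have hmean' : ∫ O, O k ∂μ = mm k := by rw [hmm]; exact hmean k
    have hexp : (fun O : Fin (N+1) → ℝ => (O k - mm k)^2)
        = fun O => O k * O k - (2 * mm k) * O k + mm k^2 := funext fun O => by ring
    have hint_cm : Integrable (fun O : Fin (N+1) → ℝ => 2 * mm k * O k) μ :=
      hintO.const_mul (2 * mm k)
    have hint_sub : Integrable (fun O : Fin (N+1) → ℝ => O k * O k - 2 * mm k * O k) μ :=
      hintOO.sub hint_cm
    have hval : ∫ O, (O k - mm k)^2 ∂μ = (∫ O, O k * O k ∂μ) - mm k ^ 2 := by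
      rw [hexp,
        integral_add hint_sub (integrable_const (mm k ^ 2)),
        integral_sub hintOO hint_cm, integral_const_mul, hmean',
        integral_const]
      simp [measure_univ]
      ring
    have hCk := hcov k k
    rw [hmean'] at hCk
    have h5 : ∫ O, (O k - mm k)^2 ∂μ ≤ Ctil N Tm Tp (k:ℕ) (k:ℕ) := by
      rw [hval]
      nlinarith [hCk, sq (mm k)]
    exact le_trans h5 (Ctil_diag_le N hN2 Tm Tp (k:ℕ) (Nat.lt_succ_iff.mp k.isLt))
  -- pointwise quadratic bound
  have hpt : ∀ O : Fin (N+1) → ℝ, (X O)^2 ≤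
      ∑ k : Fin (N+1), ∑ l : Fin (N+1),
        |c k| * |c l| * (((O k - mm k)^2 + (O l - mm l)^2)/2) := by
    intro O
    rw [hXeq O]
    have h1 : |∑ k : Fin (N+1), c k * (O k - mm k)| ≤ ∑ k : Fin (N+1), |c k| * |O k - mm k| := by
      refine le_trans (Finset.abs_sum_le_sum_abs _ _) ?_
      exact le_of_eq (Finset.sum_congr rfl fun k _ => abs_mul _ _)
    have h2 : (∑ k : Fin (N+1), c k * (O k - mm k))^2
        ≤ (∑ k : Fin (N+1), |c k| * |O k - mm k|)^2 := by
      rw [← sq_abs (∑ k : Fin (N+1), c k * (O k - mm k))]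
      exact pow_le_pow_left₀ (abs_nonneg _) h1 2
    refine le_trans h2 ?_
    rw [sq, Finset.sum_mul_sum]
    refine Finset.sum_le_sum fun k _ => Finset.sum_le_sum fun l _ => ?_
    have hq : |O k - mm k| * |O l - mm l| ≤ ((O k - mm k)^2 + (O l - mm l)^2)/2 := by
      have h2ab := two_mul_le_add_sq |O k - mm k| |O l - mm l|
      rw [sq_abs, sq_abs] at h2ab
      nlinarith [h2ab]
    calc |c k| * |O k - mm k| * (|c l| * |O l - mm l|)
        = |c k| * |c l| * (|O k - mm k| * |O l - mm l|) := by ring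
      _ ≤ |c k| * |c l| * (((O k - mm k)^2 + (O l - mm l)^2)/2) :=
          mul_le_mul_of_nonneg_left hq (by positivity)
  have hint_pair : ∀ k l : Fin (N+1), Integrable (fun O : Fin (N+1) → ℝ =>
      |c k| * |c l| * (((O k - mm k)^2 + (O l - mm l)^2)/2)) μ :=
    fun k l => (((hint_e2 k).add (hint_e2 l)).div_const 2).const_mul _
  have hintRHS : Integrable (fun O => ∑ k : Fin (N+1), ∑ l : Fin (N+1),
      |c k| * |c l| * (((O k - mm k)^2 + (O l - mm l)^2)/2)) μ := by
    exact integrable_finset_sum _ fun k _ => integrable_finset_sum _ fun l _ => hint_pair k l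
  have hXmeas : Measurable X := by
    rw [hX]
    exact Finset.measurable_sum _ fun k _ =>
      ((measurable_pi_apply k).sub measurable_const).const_mul _
  have hintX2 : Integrable (fun O => (X O)^2) μ := by
    refine (integrable_const ((((N:ℝ)+1) * (M/N * (Tp - Tm)))^2)).mono'
      (hXmeas.pow_const 2).aestronglyMeasurable ?_
    filter_upwards [hsupp] with O hO
    have h1 : |X O| ≤ ((N:ℝ)+1) * (M/N * (Tp - Tm)) := by
      rw [hXeq O]
      refine le_trans (Finset.abs_sum_le_sum_abs _ _) ?_
      have hb : ∀ k ∈ (univ : Finset (Fin (N+1))), |c k * (O k - mm k)| ≤ M/N * (Tp - Tm) := by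
        intro k _
        rw [abs_mul]
        have h3 : |O k - mm k| ≤ Tp - Tm := by
          obtain ⟨ha, hb'⟩ := hO k
          obtain ⟨hc', hd⟩ := hmIcc k
          rw [abs_le]
          constructor <;> linarith
        exact mul_le_mul (hcb k) h3 (abs_nonneg _) (by positivity)
      refine le_trans (Finset.sum_le_sum hb) ?_
      rw [Finset.sum_const, Finset.card_univ, Fintype.card_fin, nsmul_eq_mul]
      push_cast
      exact le_refl _
    rw [Real.norm_eq_abs, abs_of_nonneg (sq_nonneg _), ← sq_abs]
    exact pow_le_pow_left₀ (abs_nonneg _) h1 2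
  refine ⟨hintX2, ?_⟩
  have step1 : ∫ O, (X O)^2 ∂μ ≤ ∫ O, (∑ k : Fin (N+1), ∑ l : Fin (N+1),
      |c k| * |c l| * (((O k - mm k)^2 + (O l - mm l)^2)/2)) ∂μ :=
    integral_mono hintX2 hintRHS hpt
  have step2 : ∫ O, (∑ k : Fin (N+1), ∑ l : Fin (N+1),
      |c k| * |c l| * (((O k - mm k)^2 + (O l - mm l)^2)/2)) ∂μ
      = ∑ k : Fin (N+1), ∑ l : Fin (N+1), |c k| * |c l|
        * ((( ∫ O, (O k - mm k)^2 ∂μ) + ∫ O, (O l - mm l)^2 ∂μ)/2) := by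
    rw [integral_finset_sum _ (fun k _ => integrable_finset_sum _ fun l _ => hint_pair k l)]
    refine Finset.sum_congr rfl fun k _ => ?_
    rw [integral_finset_sum _ (fun l _ => hint_pair k l)]
    refine Finset.sum_congr rfl fun l _ => ?_
    rw [integral_const_mul, integral_div, integral_add (hint_e2 k) (hint_e2 l)]
  have step3 : ∑ k : Fin (N+1), ∑ l : Fin (N+1), |c k| * |c l|
        * ((( ∫ O, (O k - mm k)^2 ∂μ) + ∫ O, (O l - mm l)^2 ∂μ)/2)
      ≤ ∑ _k : Fin (N+1), ∑ _l : Fin (N+1), (M/N) * (M/N) * ((Tp - Tm)^2/(2*N)) := by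
    refine Finset.sum_le_sum fun k _ => Finset.sum_le_sum fun l _ => ?_
    have h1 := hvA k
    have h2 := hvA l
    have h3 := hv0 k
    have h4 := hv0 l
    refine mul_le_mul (mul_le_mul (hcb k) (hcb l) (abs_nonneg _) (by positivity))
      (by linarith) (by linarith) (by positivity)
  have step4 : (∑ _k : Fin (N+1), ∑ _l : Fin (N+1), (M/N) * (M/N) * ((Tp - Tm)^2/(2*N)))
      = (((N:ℝ)+1))^2 * ((M/N) * (M/N) * ((Tp - Tm)^2/(2*N))) := by
    rw [Finset.sum_const, Finset.sum_const, Finset.card_univ, Fintype.card_fin,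
      nsmul_eq_mul, nsmul_eq_mul]
    push_cast
    ring
  have step5 : (((N:ℝ)+1))^2 * ((M/N) * (M/N) * ((Tp - Tm)^2/(2*N)))
      ≤ 2 * M^2 * (Tp - Tm)^2 / N := by
    have hN1 : (1:ℝ) ≤ N := by
      have : (1:ℕ) ≤ N := le_trans one_le_two hN2
      exact_mod_cast this
    have hb : ((N:ℝ)+1)^2 ≤ (2*N)^2 := by nlinarith
    calc (((N:ℝ)+1))^2 * ((M/N) * (M/N) * ((Tp - Tm)^2/(2*N)))
        ≤ (2*(N:ℝ))^2 * ((M/N) * (M/N) * ((Tp - Tm)^2/(2*N))) :=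
          mul_le_mul_of_nonneg_right hb (by positivity)
      _ = 2 * M^2 * (Tp - Tm)^2 / N := by
          field_simp
  calc ∫ O, (X O)^2 ∂μ ≤ _ := step1
    _ = _ := step2
    _ ≤ _ := step3
    _ = _ := step4
    _ ≤ _ := step5

/-- one-dimensional hydrostatic limit. If `ν_N` are probability measures on
`[T₋,T₊]^{N+1}` whose means are the linear profile `m^N_k = T₋ + (k/N)(T₊−T₋)` and whose
covariances are bounded by `C̃^N`, then the empirical average of any continuous test
function concentrates on `∫₀¹ ψ(x) m(x) dx`. -/
theorem hydrostatic_limit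
    (Tm Tp : ℝ) (hT : Tm < Tp)
    (ν : (N : ℕ) → Measure (Fin (N + 1) → ℝ))
    (hprob : ∀ N, IsProbabilityMeasure (ν N))
    (hsupp : ∀ N, 2 ≤ N → ∀ᵐ O ∂(ν N), ∀ k, O k ∈ Set.Icc Tm Tp)
    (hmean : ∀ N, 2 ≤ N → ∀ k : Fin (N + 1),
        ∫ O, O k ∂(ν N) = Tm + ((k : ℕ) : ℝ) / N * (Tp - Tm))
    (hcov : ∀ N, 2 ≤ N → ∀ k l : Fin (N + 1),
        ∫ O, O k * O l ∂(ν N) - (∫ O, O k ∂(ν N)) * (∫ O, O l ∂(ν N))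
          ≤ Ctil N Tm Tp (k : ℕ) (l : ℕ))
    (ψ : ℝ → ℝ) (hψ : ContinuousOn ψ (Set.Icc 0 1)) (ε : ℝ) (hε : 0 < ε) :
    Filter.Tendsto
      (fun N => ν N {O | ε <
          |(1 / (N : ℝ)) * ∑ k : Fin (N + 1), ψ (((k : ℕ) : ℝ) / N) * O k
            - ∫ x in (0:ℝ)..1, ψ x * (Tm + x * (Tp - Tm))|})
      Filter.atTop (nhds 0) := by
  obtain ⟨M, hM⟩ : ∃ M : ℝ, ∀ x ∈ Set.Icc (0:ℝ) 1, |ψ x| ≤ M := by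
    obtain ⟨M, hM⟩ := isCompact_Icc.exists_bound_of_continuousOn hψ
    exact ⟨M, fun x hx => by simpa [Real.norm_eq_abs] using hM x hx⟩
  have hM0 : 0 ≤ M := le_trans (abs_nonneg _) (hM 0 ⟨le_refl _, zero_le_one⟩)
  have hTT : (0:ℝ) ≤ Tp - Tm := sub_nonneg.mpr hT.le
  have hgcont : ContinuousOn (fun x : ℝ => ψ x * (Tm + x * (Tp - Tm))) (Set.Icc 0 1) :=
    hψ.mul (Continuous.continuousOn (by continuity))
  -- convergence of the deterministic means
  have hmean_t : Tendsto (fun N : ℕ => (1/(N:ℝ)) * ∑ k : Fin (N+1),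
      ψ (((k:ℕ):ℝ)/N) * (Tm + ((k:ℕ):ℝ)/N * (Tp - Tm))) atTop
      (nhds (∫ x in (0:ℝ)..1, ψ x * (Tm + x * (Tp - Tm)))) := by
    have hr := riemann_tendsto _ hgcont
    have h0 : Tendsto (fun N : ℕ => 1/(N:ℝ) * (ψ 1 * (Tm + 1 * (Tp - Tm)))) atTop (nhds 0) := by
      simpa using tendsto_one_div_atTop_nhds_zero_nat.mul_const (ψ 1 * (Tm + 1 * (Tp - Tm)))
    have hsum := hr.add h0
    rw [add_zero] at hsum
    refine hsum.congr' ?_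
    filter_upwards [eventually_ge_atTop 1] with N hN1
    have hNpos : (0:ℝ) < N := by exact_mod_cast hN1
    rw [Fin.sum_univ_eq_sum_range
      (fun j : ℕ => ψ ((j:ℝ)/N) * (Tm + (j:ℝ)/N * (Tp - Tm))) (N+1),
      Finset.sum_range_succ, div_self hNpos.ne']
    ring
  have haev : ∀ᶠ N : ℕ in atTop, |(1/(N:ℝ)) * (∑ k : Fin (N+1),
      ψ (((k:ℕ):ℝ)/N) * (Tm + ((k:ℕ):ℝ)/N * (Tp - Tm)))
      - ∫ x in (0:ℝ)..1, ψ x * (Tm + x * (Tp - Tm))| < ε/2 := by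
    have h := Metric.tendsto_atTop.mp hmean_t (ε/2) (by positivity)
    obtain ⟨N₀, h⟩ := h
    filter_upwards [eventually_ge_atTop N₀] with N hN
    simpa [Real.dist_eq] using h N hN
  -- the eventual Chebyshev bound
  have key : ∀ᶠ N : ℕ in atTop, ν N {O | ε <
      |(1 / (N : ℝ)) * ∑ k : Fin (N + 1), ψ (((k : ℕ) : ℝ) / N) * O k
        - ∫ x in (0:ℝ)..1, ψ x * (Tm + x * (Tp - Tm))|}
      ≤ ENNReal.ofReal (8 * M^2 * (Tp - Tm)^2 / (ε^2 * N)) := by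
    filter_upwards [haev, eventually_ge_atTop 2] with N hNa hN2
    haveI := hprob N
    have hNpos : (0:ℝ) < N := by
      have : (0:ℕ) < N := lt_of_lt_of_le (by norm_num) hN2
      exact_mod_cast this
    obtain ⟨hint2, hvar⟩ := variance_bound Tm Tp hT N hN2 (ν N)
      (hsupp N hN2) (hmean N hN2) (hcov N hN2) ψ M hM
    have hYX : ∀ O : Fin (N+1) → ℝ,
        (1/(N:ℝ)) * (∑ k : Fin (N+1), ψ (((k:ℕ):ℝ)/N) * O k)
          - (1/(N:ℝ)) * (∑ k : Fin (N+1), ψ (((k:ℕ):ℝ)/N) * (Tm + ((k:ℕ):ℝ)/N * (Tp - Tm)))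
        = ∑ k : Fin (N+1), (ψ (((k:ℕ):ℝ)/N) / N) * (O k - (Tm + ((k:ℕ):ℝ)/N * (Tp - Tm))) := by
      intro O
      rw [Finset.mul_sum, Finset.mul_sum, ← Finset.sum_sub_distrib]
      exact Finset.sum_congr rfl fun k _ => by ring
    have hsub : {O : Fin (N+1) → ℝ | ε <
        |(1/(N:ℝ)) * ∑ k : Fin (N+1), ψ (((k:ℕ):ℝ)/N) * O k
          - ∫ x in (0:ℝ)..1, ψ x * (Tm + x * (Tp - Tm))|}
        ⊆ {O : Fin (N+1) → ℝ | (ε/2)^2 ≤ (∑ k : Fin (N+1),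
            (ψ (((k:ℕ):ℝ)/N) / N) * (O k - (Tm + ((k:ℕ):ℝ)/N * (Tp - Tm))))^2} := by
      intro O hO
      simp only [Set.mem_setOf_eq] at hO ⊢
      have habs : |(1/(N:ℝ)) * ∑ k : Fin (N+1), ψ (((k:ℕ):ℝ)/N) * O k
          - ∫ x in (0:ℝ)..1, ψ x * (Tm + x * (Tp - Tm))|
          ≤ |(1/(N:ℝ)) * (∑ k : Fin (N+1), ψ (((k:ℕ):ℝ)/N) * O k)
              - (1/(N:ℝ)) * (∑ k : Fin (N+1), ψ (((k:ℕ):ℝ)/N) * (Tm + ((k:ℕ):ℝ)/N * (Tp - Tm)))|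
            + |(1/(N:ℝ)) * (∑ k : Fin (N+1),
                ψ (((k:ℕ):ℝ)/N) * (Tm + ((k:ℕ):ℝ)/N * (Tp - Tm)))
              - ∫ x in (0:ℝ)..1, ψ x * (Tm + x * (Tp - Tm))| := by
        refine le_trans (le_of_eq ?_) (abs_add_le _ _)
        congr 1
        ring
      have h1 : ε/2 ≤ |(1/(N:ℝ)) * (∑ k : Fin (N+1), ψ (((k:ℕ):ℝ)/N) * O k)
          - (1/(N:ℝ)) * (∑ k : Fin (N+1),
            ψ (((k:ℕ):ℝ)/N) * (Tm + ((k:ℕ):ℝ)/N * (Tp - Tm)))| := by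
        linarith
      have h2 := pow_le_pow_left₀ (show (0:ℝ) ≤ ε/2 by positivity) h1 2
      rw [sq_abs] at h2
      exact hYX O ▸ h2
    have hmarkov := mul_meas_ge_le_integral_of_nonneg (μ := ν N)
      (f := fun O : Fin (N+1) → ℝ => (∑ k : Fin (N+1),
        (ψ (((k:ℕ):ℝ)/N) / N) * (O k - (Tm + ((k:ℕ):ℝ)/N * (Tp - Tm))))^2)
      (Filter.Eventually.of_forall fun O => sq_nonneg _) hint2 ((ε/2)^2)
    have hε2 : (0:ℝ) < (ε/2)^2 := by positivity
    refine le_trans (measure_mono hsub) ?_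
    rw [← ENNReal.ofReal_toReal (measure_ne_top (ν N) _)]
    apply ENNReal.ofReal_le_ofReal
    have htr : (ν N {O : Fin (N+1) → ℝ | (ε/2)^2 ≤ (∑ k : Fin (N+1),
        (ψ (((k:ℕ):ℝ)/N) / N) * (O k - (Tm + ((k:ℕ):ℝ)/N * (Tp - Tm))))^2}).toReal
        ≤ (2 * M^2 * (Tp - Tm)^2 / N) / (ε/2)^2 := by
      rw [le_div_iff₀ hε2]
      have := hmarkov.trans hvar
      rw [measureReal_def] at this
      linarith
    refine le_trans htr (le_of_eq ?_)
    field_simp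
    ring
  -- squeeze
  have hb : Tendsto (fun N : ℕ => ENNReal.ofReal (8 * M^2 * (Tp - Tm)^2 / (ε^2 * (N:ℝ))))
      atTop (nhds 0) := by
    have h1 : Tendsto (fun N : ℕ => 8 * M^2 * (Tp - Tm)^2 / ε^2 / (N:ℝ)) atTop (nhds 0) :=
      tendsto_const_div_atTop_nhds_zero_nat _
    have h2 : (fun N : ℕ => 8 * M^2 * (Tp - Tm)^2 / (ε^2 * (N:ℝ)))
        = fun N : ℕ => 8 * M^2 * (Tp - Tm)^2 / ε^2 / (N:ℝ) := by
      funext N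
      rw [div_div]
    rw [← ENNReal.ofReal_zero]
    exact (ENNReal.continuous_ofReal.tendsto 0).comp (h2 ▸ h1)
  exact tendsto_of_tendsto_of_tendsto_of_le_of_le' tendsto_const_nhds hb
    (Filter.Eventually.of_forall fun N => zero_le) key
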